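/- Let F₀, b, c ∈ ℝ with F₀ ≠ 0. Then there is no continuously differentiable function r : ℝ → ℝ that is 2π-periodic, satisfies r(θ) > 0 for all θ ∈ ℝ, and solves the Riccati equation r'(θ) = F₀·r(θ) + (b·cos θ + c·sin θ)·r(θ)² for all θ ∈ ℝ. -/

import Mathlib

open Real intervalIntegral

/-- A rigid planar system in polar form: if `F₀ ≠ 0`, the Riccati equation
`r' = F₀ r + (b cos θ + c sin θ) r²` has no positive `2π`-periodic `C¹` solution. -/
theorem stmt_0 (F₀ b c : ℝ) (hF₀ : F₀ ≠ 0) :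
    ¬ ∃ r : ℝ → ℝ, ContDiff ℝ 1 r ∧
      (∀ θ : ℝ, r (θ + 2 * Real.pi) = r θ) ∧
      (∀ θ : ℝ, 0 < r θ) ∧
      (∀ θ : ℝ, deriv r θ =
        F₀ * r θ + (b * Real.cos θ + c * Real.sin θ) * (r θ) ^ 2) := by
  rintro ⟨r, hr, hper, hpos, hode⟩
  have hrc : Continuous r := hr.continuous
  have hrd : Differentiable ℝ r := hr.differentiable one_ne_zero
  have hne : ∀ θ, r θ ≠ 0 := fun θ => (hpos θ).ne'
  set u : ℝ → ℝ := fun θ => -(r θ)⁻¹ with hu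
  have hu' : ∀ θ, HasDerivAt u (F₀ * (r θ)⁻¹ + (b * Real.cos θ + c * Real.sin θ)) θ := by
    intro θ
    have h1 : HasDerivAt (fun t => (r t)⁻¹) (-(deriv r θ) / (r θ) ^ 2) θ :=
      (hrd θ).hasDerivAt.inv (hne θ)
    have h2 : HasDerivAt (fun t => -(r t)⁻¹) (-(-(deriv r θ) / (r θ) ^ 2)) θ := h1.neg
    convert h2 using 1
    rw [hode θ]
    field_simp [hne θ]
  have hcont : Continuous (fun θ => F₀ * (r θ)⁻¹ + (b * Real.cos θ + c * Real.sin θ)) := by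
    fun_prop (disch := exact hne)
  have hint : ∫ θ in (0:ℝ)..(2 * Real.pi),
      (F₀ * (r θ)⁻¹ + (b * Real.cos θ + c * Real.sin θ)) = u (2 * Real.pi) - u 0 := by
    exact intervalIntegral.integral_eq_sub_of_hasDerivAt (fun θ _ => hu' θ)
      (hcont.intervalIntegrable _ _)
  have huper : u (2 * Real.pi) - u 0 = 0 := by
    have := hper 0
    simp only [hu, zero_add] at *
    rw [this]; ring
  rw [huper] at hint
  have hsplit : ∫ θ in (0:ℝ)..(2 * Real.pi),
      (F₀ * (r θ)⁻¹ + (b * Real.cos θ + c * Real.sin θ)) =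
      F₀ * (∫ θ in (0:ℝ)..(2 * Real.pi), (r θ)⁻¹) +
      (b * ∫ θ in (0:ℝ)..(2 * Real.pi), Real.cos θ) +
      (c * ∫ θ in (0:ℝ)..(2 * Real.pi), Real.sin θ) := by
    have hi1 : IntervalIntegrable (fun θ => F₀ * (r θ)⁻¹) MeasureTheory.volume 0 (2 * Real.pi) := by
      apply Continuous.intervalIntegrable
      fun_prop (disch := exact hne)
    have hi2 : IntervalIntegrable (fun θ => b * Real.cos θ) MeasureTheory.volume 0 (2 * Real.pi) :=
      (continuous_const.mul Real.continuous_cos).intervalIntegrable _ _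
    have hi3 : IntervalIntegrable (fun θ => c * Real.sin θ) MeasureTheory.volume 0 (2 * Real.pi) :=
      (continuous_const.mul Real.continuous_sin).intervalIntegrable _ _
    rw [show (fun θ => F₀ * (r θ)⁻¹ + (b * Real.cos θ + c * Real.sin θ)) =
      (fun θ => (F₀ * (r θ)⁻¹ + b * Real.cos θ) + c * Real.sin θ) from by funext θ; ring]
    rw [intervalIntegral.integral_add (hi1.add hi2) hi3, intervalIntegral.integral_add hi1 hi2,
      intervalIntegral.integral_const_mul, intervalIntegral.integral_const_mul,
      intervalIntegral.integral_const_mul]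
  rw [hsplit] at hint
  rw [integral_cos, integral_sin] at hint
  simp [Real.sin_two_pi, Real.cos_two_pi] at hint
  have hIpos : 0 < ∫ θ in (0:ℝ)..(2 * Real.pi), (r θ)⁻¹ := by
    apply intervalIntegral.intervalIntegral_pos_of_pos
    · exact (Continuous.intervalIntegrable (by fun_prop (disch := exact hne)) _ _)
    · intro x; exact inv_pos.2 (hpos x)
    · positivity
  rcases hint with h | h
  · exact hF₀ h
  · exact hIpos.ne' h
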